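/- Let H be a group and let J₁, …, J_k be finitely many subgroups of H, none of which is virtually abelian. Let {ρₙ : H → PSL(2,ℂ)} be a sequence of discrete and faithful representations, and suppose that for each i there is a sequence {gₙ^i} in PSL(2,ℂ) such that {ρₙ^{gₙ^i}|_{J_i}} converges pointwise to a discrete and faithful representation of J_i. Suppose moreover that for each pair i, j there exist hₙ ∈ H and a compact subset K_{ij} of PSL(2,ℂ) with gₙ^i ρₙ(hₙ) (gₙ^j)⁻¹ ∈ K_{ij} for all n. Then there is a single sequence {gₙ} in PSL(2,ℂ) such that, after passing to a subsequence, {ρₙ^{gₙ}} converges up to inner automorphism on each J_i (i.e. for each i there exist hₙ^i ∈ H such that {(ρₙ^{gₙ}) ∘ I_{hₙ^i}|_{J_i}} converges pointwise to a discrete and faithful representation of J_i); moreover, for each i there exist h̃ₙ ∈ H and a compact set with {gₙ ρₙ(h̃ₙ) (gₙ^i)⁻¹} contained in it. -/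

import Mathlib

open Matrix Filter Topology

/-- `SL(2,ℂ)`. -/
abbrev SL2C := Matrix.SpecialLinearGroup (Fin 2) ℂ

/-- The topology on `SL(2,ℂ)` induced from the matrix topology. -/
noncomputable instance : TopologicalSpace SL2C :=
  TopologicalSpace.induced (fun A => (A : Matrix (Fin 2) (Fin 2) ℂ)) inferInstance

/-- `PSL(2,ℂ) = SL(2,ℂ)/{±I}`, with the quotient topology. -/
abbrev PSL2C := Matrix.ProjectiveSpecialLinearGroup (Fin 2) ℂ

/-- A representation into `PSL(2,ℂ)` is discrete and faithful if it is injective and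
its image is a discrete subgroup. -/
def IsDiscreteFaithful {G : Type*} [Group G] (ρ : G →* PSL2C) : Prop :=
  Function.Injective ρ ∧ DiscreteTopology ρ.range

/-- A group is virtually abelian if it has an abelian subgroup of finite index. -/
def VirtuallyAbelian (G : Type*) [Group G] : Prop :=
  ∃ A : Subgroup G, IsMulCommutative A ∧ A.FiniteIndex

/-- The conjugate representation `ρ^g : h ↦ g ρ(h) g⁻¹`. -/
def conjRep {G : Type*} [Group G] (g : PSL2C) (ρ : G →* PSL2C) : G →* PSL2C :=
  (MulAut.conj g).toMonoidHom.comp ρ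

/-- Pointwise convergence of a sequence of representations into `PSL(2,ℂ)`. -/
def TendstoRep {G : Type*} [Group G] (ρs : ℕ → G →* PSL2C) (ρ : G →* PSL2C) : Prop :=
  ∀ g : G, Tendsto (fun n => ρs n g) atTop (𝓝 (ρ g))

instance : IsTopologicalGroup SL2C where
  continuous_mul := by
    apply continuous_induced_rng.2
    show Continuous fun p : SL2C × SL2C => ((p.1 * p.2 : SL2C) : Matrix (Fin 2) (Fin 2) ℂ)
    simp only [Matrix.SpecialLinearGroup.coe_mul]
    exact (continuous_induced_dom.comp continuous_fst).matrix_mul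
      (continuous_induced_dom.comp continuous_snd)
  continuous_inv := by
    apply continuous_induced_rng.2
    show Continuous fun A : SL2C => ((A⁻¹ : SL2C) : Matrix (Fin 2) (Fin 2) ℂ)
    simp only [Matrix.SpecialLinearGroup.coe_inv]
    exact continuous_induced_dom.matrix_adjugate

instance : FirstCountableTopology (Matrix (Fin 2) (Fin 2) ℂ) :=
  inferInstanceAs (FirstCountableTopology (Fin 2 → Fin 2 → ℂ))

instance : FirstCountableTopology SL2C :=
  TopologicalSpace.firstCountableTopology_induced _ _ _

lemma isDiscreteFaithful_conjRep {G : Type*} [Group G] (c : PSL2C) (σ : G →* PSL2C)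
    (hσ : IsDiscreteFaithful σ) : IsDiscreteFaithful (conjRep c σ) := by
  obtain ⟨hinj, hdisc⟩ := hσ
  refine ⟨fun x y hxy => hinj ((MulAut.conj c).injective hxy), ?_⟩
  let e : PSL2C ≃ₜ PSL2C := (Homeomorph.mulLeft c).trans (Homeomorph.mulRight c⁻¹)
  have hs : ((conjRep c σ).range : Set PSL2C) = e '' (σ.range : Set PSL2C) := by
    ext y
    constructor
    · rintro ⟨x, rfl⟩
      exact ⟨σ x, ⟨x, rfl⟩, rfl⟩
    · rintro ⟨z, ⟨x, rfl⟩, rfl⟩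
      exact ⟨x, rfl⟩
  have : DiscreteTopology ↥(e '' (σ.range : Set PSL2C)) :=
    (e.image (σ.range : Set PSL2C)).symm.isEmbedding.discreteTopology
  rw [← hs] at this
  exact this

/-- Lemma "basepoints and limits". Let `J₁, …, J_k` be nonelementary
subgroups of `H` and suppose `{ρₙ}` converges up to conjugacy on each `J_i`, with conjugating
sequences `{gₙ^i}`, and that for each pair `i, j` the sequence `{gₙ^i ρₙ(hₙ) (gₙ^j)⁻¹}` lies in
a compact set for suitable `hₙ ∈ H`. Then there is a single conjugating sequence `{gₙ}` such
that, after passing to a subsequence, `{ρₙ^{gₙ}}` converges up to inner automorphism on each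
`J_i`; moreover `{gₙ ρₙ(h̃ₙ) (gₙ^i)⁻¹}` lies in a compact set for suitable `h̃ₙ ∈ H`. -/
theorem common_conjugating_sequence {H : Type*} [Group H] {k : ℕ}
    (J : Fin k → Subgroup H) (hJ : ∀ i, ¬ VirtuallyAbelian (J i))
    (ρs : ℕ → H →* PSL2C) (hρs : ∀ n, IsDiscreteFaithful (ρs n))
    (g' : Fin k → ℕ → PSL2C) (σ : ∀ i, (J i : Subgroup H) →* PSL2C)
    (hσ : ∀ i, IsDiscreteFaithful (σ i))
    (hconv : ∀ i, TendstoRep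
      (fun n => (conjRep (g' i n) (ρs n)).comp (J i).subtype) (σ i))
    (hpair : ∀ i j : Fin k, ∃ (h : ℕ → H) (K : Set PSL2C), IsCompact K ∧
      ∀ n, g' i n * ρs n (h n) * (g' j n)⁻¹ ∈ K) :
    ∃ g : ℕ → PSL2C,
      (∃ φ : ℕ → ℕ, StrictMono φ ∧
        ∀ i, ∃ (h : ℕ → H) (σ' : (J i : Subgroup H) →* PSL2C),
          IsDiscreteFaithful σ' ∧
          TendstoRep (fun n =>
            ((conjRep (g (φ n)) (ρs (φ n))).comp
              (MulAut.conj (h n)).toMonoidHom).comp (J i).subtype) σ') ∧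
      ∀ i, ∃ (h : ℕ → H) (K : Set PSL2C), IsCompact K ∧
        ∀ n, g n * ρs n (h n) * (g' i n)⁻¹ ∈ K := by
  rcases Nat.eq_zero_or_pos k with hk | hk
  · subst hk
    exact ⟨fun _ => 1, ⟨id, strictMono_id, fun i => i.elim0⟩, fun i => i.elim0⟩
  have i₀ : Fin k := ⟨0, hk⟩
  choose h K hKc hK using hpair i₀
  set c : ℕ → (Fin k → PSL2C) := fun n i => g' i₀ n * ρs n (h i n) * (g' i n)⁻¹ with hc
  have hmem : ∀ n, c n ∈ Set.pi Set.univ K := fun n i _ => hK i n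
  obtain ⟨a, -, φ, hφ, hlim⟩ := (isCompact_univ_pi hKc).tendsto_subseq hmem
  refine ⟨g' i₀, ⟨φ, hφ, ?_⟩, fun i => ⟨h i, K i, hKc i, hK i⟩⟩
  intro i
  have hlimi : Tendsto (fun n => c (φ n) i) atTop (𝓝 (a i)) :=
    (tendsto_pi_nhds.1 hlim) i
  refine ⟨fun n => h i (φ n), conjRep (a i) (σ i),
    isDiscreteFaithful_conjRep _ _ (hσ i), ?_⟩
  intro x
  have h1 : Tendsto (fun n => g' i (φ n) * ρs (φ n) ((J i).subtype x) * (g' i (φ n))⁻¹)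
      atTop (𝓝 (σ i x)) := by
    have := (hconv i x).comp hφ.tendsto_atTop
    simpa [conjRep, Function.comp_def] using this
  have key : ∀ n, ((conjRep (g' i₀ (φ n)) (ρs (φ n))).comp
      (MulAut.conj (h i (φ n))).toMonoidHom).comp (J i).subtype x
      = c (φ n) i * (g' i (φ n) * ρs (φ n) ((J i).subtype x) * (g' i (φ n))⁻¹)
        * (c (φ n) i)⁻¹ := by
    intro n
    simp only [conjRep, MonoidHom.comp_apply, MulEquiv.coe_toMonoidHom, MulAut.conj_apply,
      hc, _root_.map_mul, _root_.map_inv]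
    group
  have h2 := (hlimi.mul h1).mul hlimi.inv
  have hgoal : conjRep (a i) (σ i) x = a i * σ i x * (a i)⁻¹ := rfl
  rw [hgoal]
  simpa only [key] using h2
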